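/- Let k be a field, let n ≥ 1 and d ≥ 2 be integers, and let g, h ∈ k[x₀,…,xₙ] be polynomials in n+1 variables with g homogeneous of degree d−1, h homogeneous of degree d, g ≠ 0, h ≠ 0, and g + h prime (irreducible) in k[x₀,…,xₙ]. Then the fraction field of the integral domain k[x₀,…,xₙ]/(g+h) is isomorphic as a k-algebra to the fraction field of the polynomial ring k[y₁,…,yₙ] in n variables, i.e., the affine hypersurface {g + h = 0} ⊂ 𝔸^{n+1} is rational over k. -/

import Mathlib

open MvPolynomial

namespace AffineHypersurfaceAux

variable {k : Type*} [Field k]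

lemma finsupp_degree_eq_sum {σ : Type*} (m : σ →₀ ℕ) :
    m.degree = m.sum fun _ e => e := rfl

/-- Scaling a homogeneous polynomial's arguments. -/
lemma aeval_mul_homogeneous {σ : Type*} {A : Type*} [CommRing A] [Algebra k A]
    {p : MvPolynomial σ k} {s : ℕ} (hp : p.IsHomogeneous s) (t : A) (u : σ → A) :
    aeval (fun i => t * u i) p = t ^ s * aeval u p := by
  conv_lhs => rw [← support_sum_monomial_coeff p]
  conv_rhs => rw [← support_sum_monomial_coeff p]
  rw [map_sum, map_sum, Finset.mul_sum]
  refine Finset.sum_congr rfl fun m hm => ?_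
  have hdeg : m.degree = s := by
    rw [Finsupp.degree_eq_weight_one]
    exact hp (mem_support_iff.mp hm)
  rw [aeval_monomial, aeval_monomial]
  have : (m.prod fun i e => (t * u i) ^ e) = t ^ s * m.prod fun i e => u i ^ e := by
    rw [Finsupp.prod, Finsupp.prod]
    simp_rw [mul_pow]
    rw [Finset.prod_mul_distrib, Finset.prod_pow_eq_pow_sum]
    rw [← hdeg]; rfl
  rw [this]; ring

lemma homogeneousComponent_mul_left {σ : Type*} {p : MvPolynomial σ k} {s : ℕ}
    (hp : p.IsHomogeneous s) (r : MvPolynomial σ k) (e : ℕ) :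
    homogeneousComponent (s + e) (p * r) = p * homogeneousComponent e r := by
  induction r using MvPolynomial.induction_on' with
  | add q r hq hr => rw [mul_add, map_add, map_add, hq, hr, mul_add]
  | monomial u a =>
    have hu : (monomial u a : MvPolynomial σ k) ∈ homogeneousSubmodule σ k u.degree :=
      (mem_homogeneousSubmodule _ _).mpr (isHomogeneous_monomial a rfl)
    have hpu : p * monomial u a ∈ homogeneousSubmodule σ k (s + u.degree) :=
      (mem_homogeneousSubmodule _ _).mpr
        (hp.mul ((mem_homogeneousSubmodule _ _).mp hu))
    rw [homogeneousComponent_of_mem hu, homogeneousComponent_of_mem hpu]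
    by_cases he : e = u.degree
    · subst he; simp
    · rw [if_neg he, if_neg (by omega), mul_zero]

lemma homogeneousComponent_mul_left_zero {σ : Type*} {p : MvPolynomial σ k} {s : ℕ}
    (hp : p.IsHomogeneous s) (r : MvPolynomial σ k) {e : ℕ} (he : e < s) :
    homogeneousComponent e (p * r) = 0 := by
  induction r using MvPolynomial.induction_on' with
  | add q r hq hr => rw [mul_add, map_add, hq, hr, add_zero]
  | monomial u a =>
    have hpu : p * monomial u a ∈ homogeneousSubmodule σ k (s + u.degree) :=
      (mem_homogeneousSubmodule _ _).mpr
        (hp.mul (isHomogeneous_monomial a rfl))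
    rw [homogeneousComponent_of_mem hpu, if_neg (by omega)]

/-- A sum of two nonzero homogeneous polynomials of different degrees cannot divide
a nonzero homogeneous polynomial. -/
lemma not_dvd_homogeneous {σ : Type*} {g h Q : MvPolynomial σ k} {dg dh N : ℕ}
    (hg : g.IsHomogeneous dg) (hh : h.IsHomogeneous dh) (hg0 : g ≠ 0) (hh0 : h ≠ 0)
    (hlt : dg < dh) (hQ : Q.IsHomogeneous N) (hQ0 : Q ≠ 0) : ¬ g + h ∣ Q := by
  rintro ⟨r, hr⟩
  have hr0 : r ≠ 0 := by rintro rfl; rw [mul_zero] at hr; exact hQ0 hr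
  have hsupp : r.support.Nonempty := Finset.nonempty_iff_ne_empty.mpr (fun he => hr0 (MvPolynomial.support_eq_empty.mp he))
  have hb : homogeneousComponent r.totalDegree r ≠ 0 := by
    obtain ⟨m, hm, hmb⟩ := Finset.exists_mem_eq_sup r.support hsupp
      (fun m => m.sum fun _ e => e)
    intro hzero
    have hcoeff := coeff_homogeneousComponent (n := r.totalDegree) (φ := r) m
    rw [hzero, coeff_zero,
      if_pos (by rw [finsupp_degree_eq_sum]; exact hmb.symm)] at hcoeff
    exact mem_support_iff.mp hm hcoeff.symm
  set b := r.totalDegree with hbdef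
  obtain ⟨ma, hma, hmaa⟩ := Finset.exists_mem_eq_inf' hsupp Finsupp.degree
  set a := r.support.inf' hsupp Finsupp.degree with hadef
  have ha : homogeneousComponent a r ≠ 0 := by
    intro hzero
    have hcoeff := coeff_homogeneousComponent (n := a) (φ := r) ma
    rw [hzero, coeff_zero, if_pos hmaa.symm] at hcoeff
    exact mem_support_iff.mp hma hcoeff.symm
  have ha0 : ∀ e, e < a → homogeneousComponent e r = 0 := by
    intro e he
    apply homogeneousComponent_eq_zero'
    intro m hm hme
    have : a ≤ m.degree := Finset.inf'_le _ hm
    omega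
  have hab : a ≤ b := by
    have h1 : a = ma.degree := hmaa
    have h2 : (ma.sum fun _ e => e) ≤ b := le_totalDegree hma
    rw [← finsupp_degree_eq_sum] at h2
    omega
  have hQmem : Q ∈ homogeneousSubmodule σ k N := (mem_homogeneousSubmodule _ _).mpr hQ
  -- top component
  have htop : homogeneousComponent (dh + b) Q = h * homogeneousComponent b r := by
    rw [hr, add_mul, map_add]
    have hrb : homogeneousComponent (dh - dg + b) r = 0 := by
      apply homogeneousComponent_eq_zero; omega
    have h1 : homogeneousComponent (dh + b) (g * r) = 0 := by
      have heq : dh + b = dg + (dh - dg + b) := by omega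
      rw [heq, homogeneousComponent_mul_left hg, hrb, mul_zero]
    rw [h1, zero_add, homogeneousComponent_mul_left hh]
  have htopne : homogeneousComponent (dh + b) Q ≠ 0 := by
    rw [htop]; exact mul_ne_zero hh0 hb
  -- bottom component
  have hbot : homogeneousComponent (dg + a) Q = g * homogeneousComponent a r := by
    rw [hr, add_mul, map_add]
    have h2 : homogeneousComponent (dg + a) (h * r) = 0 := by
      by_cases hc : dg + a < dh
      · exact homogeneousComponent_mul_left_zero hh r hc
      · have heq : dg + a = dh + (dg + a - dh) := by omega
        rw [heq, homogeneousComponent_mul_left hh, ha0 _ (by omega), mul_zero]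
    rw [h2, add_zero, homogeneousComponent_mul_left hg]
  have hbotne : homogeneousComponent (dg + a) Q ≠ 0 := by
    rw [hbot]; exact mul_ne_zero hg0 ha
  have e1 : dh + b = N := by
    by_contra hne
    rw [homogeneousComponent_of_mem hQmem, if_neg hne] at htopne
    exact htopne rfl
  have e2 : dg + a = N := by
    by_contra hne
    rw [homogeneousComponent_of_mem hQmem, if_neg hne] at hbotne
    exact hbotne rfl
  omega

/-- Homogenization with respect to a new variable `0 : Fin (n+1)`. -/
lemma exists_homogenization {n : ℕ} (q : MvPolynomial (Fin n) k) :
    ∃ Q : MvPolynomial (Fin (n + 1)) k, Q.IsHomogeneous q.totalDegree ∧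
      aeval (Fin.cases 1 X : Fin (n + 1) → MvPolynomial (Fin n) k) Q = q := by
  classical
  set N := q.totalDegree with hN
  refine ⟨∑ m ∈ q.support, X 0 ^ (N - m.degree) * rename Fin.succ (monomial m (coeff m q)),
    ?_, ?_⟩
  · apply IsHomogeneous.sum
    intro m hm
    have h1 : (X (0 : Fin (n+1)) ^ (N - m.degree) : MvPolynomial (Fin (n+1)) k).IsHomogeneous
        (N - m.degree) := isHomogeneous_X_pow _ _
    have h2 : (rename Fin.succ (monomial m (coeff m q))).IsHomogeneous m.degree :=
      (isHomogeneous_monomial (coeff m q) rfl).rename_isHomogeneous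
    have hle : m.degree ≤ N := by
      rw [finsupp_degree_eq_sum, hN]; exact le_totalDegree hm
    have h3 := h1.mul h2
    rwa [Nat.sub_add_cancel hle] at h3
  · rw [map_sum]
    conv_rhs => rw [← support_sum_monomial_coeff q]
    refine Finset.sum_congr rfl fun m hm => ?_
    rw [map_mul, map_pow, aeval_X, aeval_rename]
    have hcomp : ((Fin.cases 1 X : Fin (n + 1) → MvPolynomial (Fin n) k) ∘ Fin.succ) = X := by
      funext j; simp
    rw [hcomp, aeval_X_left_apply]
    simp

/-- Main auxiliary result, with abstract fraction fields. -/
lemma main_aux (n d : ℕ) (hd : 2 ≤ d)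
    (g h : MvPolynomial (Fin (n + 1)) k)
    (hg : g.IsHomogeneous (d - 1)) (hh : h.IsHomogeneous d)
    (hg0 : g ≠ 0) (hh0 : h ≠ 0)
    (A : Type*) [CommRing A] [IsDomain A] [Algebra k A]
    (mk : MvPolynomial (Fin (n + 1)) k →ₐ[k] A)
    (hmksurj : Function.Surjective mk)
    (hmkker : ∀ p : MvPolynomial (Fin (n + 1)) k, mk p = 0 ↔ (g + h) ∣ p)
    (K : Type*) [Field K] [Algebra A K] [IsFractionRing A K]
    [Algebra k K] [IsScalarTower k A K]
    (L : Type*) [Field L] [Algebra (MvPolynomial (Fin n) k) L]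
    [IsFractionRing (MvPolynomial (Fin n) k) L]
    [Algebra k L] [IsScalarTower k (MvPolynomial (Fin n) k) L] :
    Nonempty (K ≃ₐ[k] L) := by
  classical
  have hdlt : d - 1 < d := by omega
  set S := MvPolynomial (Fin n) k with hS
  set c : Fin (n + 1) → K := fun i => algebraMap A K (mk (X i)) with hc
  have hPhi : ∀ p : MvPolynomial (Fin (n + 1)) k,
      aeval c p = algebraMap A K (mk p) := by
    intro p
    have hhom : (aeval c : MvPolynomial (Fin (n + 1)) k →ₐ[k] K) =
        (IsScalarTower.toAlgHom k A K).comp mk := by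
      apply MvPolynomial.algHom_ext
      intro i
      simp [hc]
    exact AlgHom.congr_fun hhom p
  have hker : ∀ p : MvPolynomial (Fin (n + 1)) k, aeval c p = 0 ↔ (g + h) ∣ p := by
    intro p
    rw [hPhi p, map_eq_zero_iff (algebraMap A K) (IsFractionRing.injective A K)]
    exact hmkker p
  have hnd : ∀ (Q : MvPolynomial (Fin (n + 1)) k) (N : ℕ),
      Q.IsHomogeneous N → Q ≠ 0 → aeval c Q ≠ 0 := by
    intro Q N hQ hQ0 hzero
    exact not_dvd_homogeneous hg hh hg0 hh0 hdlt hQ hQ0 ((hker Q).mp hzero)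
  have hc0 : c 0 ≠ 0 := by
    have h1 := hnd (X 0) 1 (isHomogeneous_X _ _) (X_ne_zero 0)
    rwa [aeval_X] at h1
  set v : Fin n → K := fun j => c j.succ * (c 0)⁻¹ with hv
  have hscale : ∀ i, c i = c 0 * Fin.cases 1 v i := by
    intro i
    induction i using Fin.cases with
    | zero => simp
    | succ j =>
      simp only [Fin.cases_succ, hv]
      field_simp
  have hcfun : c = fun i => c 0 * Fin.cases 1 v i := funext hscale
  -- key evaluation identity for homogeneous polynomials
  have hevalhom : ∀ (p : MvPolynomial (Fin (n + 1)) k) (s : ℕ), p.IsHomogeneous s →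
      aeval c p = c 0 ^ s * aeval v (aeval (Fin.cases 1 X : Fin (n+1) → S) p) := by
    intro p s hp
    have h1 : aeval c p = c 0 ^ s * aeval (Fin.cases 1 v) p := by
      conv_lhs => rw [hcfun]
      exact aeval_mul_homogeneous hp (c 0) _
    have h2 : aeval (Fin.cases 1 v : Fin (n+1) → K) p
        = aeval v (aeval (Fin.cases 1 X : Fin (n+1) → S) p) := by
      have hcomp : ((aeval v : S →ₐ[k] K).comp
          (aeval (Fin.cases 1 X : Fin (n+1) → S) : MvPolynomial (Fin (n + 1)) k →ₐ[k] S))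
          = (aeval (Fin.cases 1 v : Fin (n+1) → K) :
              MvPolynomial (Fin (n + 1)) k →ₐ[k] K) := by
        rw [MvPolynomial.comp_aeval]
        congr 1
        funext i
        induction i using Fin.cases with
        | zero => simp
        | succ j => simp
      exact (AlgHom.congr_fun hcomp p).symm
    rw [h1, h2]
  -- injectivity of aeval v
  have hinj : Function.Injective (aeval v : S →ₐ[k] K) := by
    rw [injective_iff_map_eq_zero]
    intro q hq0
    by_contra hq
    obtain ⟨Q, hQhom, hQev⟩ := exists_homogenization (k := k) q
    have hQ0 : Q ≠ 0 := by
      rintro rfl; rw [map_zero] at hQev; exact hq hQev.symm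
    have h1 := hevalhom Q q.totalDegree hQhom
    rw [hQev, hq0, mul_zero] at h1
    exact hnd Q q.totalDegree hQhom hQ0 h1
  -- the lifted map L → K
  set Ψ : L →ₐ[k] K := IsFractionRing.liftAlgHom hinj with hΨ
  have hΨalg : ∀ q : S, Ψ (algebraMap S L q) = aeval v q := by
    intro q
    rw [hΨ, IsFractionRing.liftAlgHom_apply, IsFractionRing.lift_algebraMap]
    rfl
  -- surjectivity
  set F : Subfield K := Ψ.toRingHom.fieldRange with hF
  have hvF : ∀ j, v j ∈ F := by
    intro j
    refine ⟨algebraMap S L (X j), ?_⟩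
    rw [AlgHom.toRingHom_eq_coe, RingHom.coe_coe, hΨalg, aeval_X]
  have hgh0 : aeval c (g + h) = 0 := by
    rw [hker]
  have hhne : aeval c h ≠ 0 := hnd h d hh hh0
  have ht : c 0 ∈ F := by
    set G := aeval v (aeval (Fin.cases 1 X : Fin (n+1) → S) g) with hG
    set H := aeval v (aeval (Fin.cases 1 X : Fin (n+1) → S) h) with hH
    have hgeval : aeval c g = c 0 ^ (d - 1) * G := hevalhom g (d - 1) hg
    have hheval : aeval c h = c 0 ^ d * H := hevalhom h d hh
    have hHne : H ≠ 0 := by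
      intro h0
      rw [hheval, h0, mul_zero] at hhne
      exact hhne rfl
    have hrel : G + c 0 * H = 0 := by
      have hpow : c 0 ^ d = c 0 ^ (d - 1) * c 0 := by
        conv_lhs => rw [show d = (d - 1) + 1 by omega]
        rw [pow_succ]
      have hsum : aeval c g + aeval c h = 0 := by rw [← map_add, hgh0]
      rw [hgeval, hheval, hpow] at hsum
      have h2 : c 0 ^ (d - 1) * (G + c 0 * H) = 0 := by linear_combination hsum
      rcases mul_eq_zero.mp h2 with h3 | h3
      · exact absurd h3 (pow_ne_zero _ hc0)
      · exact h3
    have hc0eq : c 0 = -G * H⁻¹ := by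
      have h4 : c 0 * H = -G := by linear_combination hrel
      rw [← h4, mul_assoc, mul_inv_cancel₀ hHne, mul_one]
    rw [hc0eq]
    have hGF : G ∈ F := ⟨algebraMap S L _, by
      rw [AlgHom.toRingHom_eq_coe, RingHom.coe_coe, hΨalg]⟩
    have hHF : H ∈ F := ⟨algebraMap S L _, by
      rw [AlgHom.toRingHom_eq_coe, RingHom.coe_coe, hΨalg]⟩
    exact F.mul_mem (F.neg_mem hGF) (F.inv_mem hHF)
  have hcF : ∀ i, c i ∈ F := by
    intro i
    induction i using Fin.cases with
    | zero => exact ht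
    | succ j =>
      rw [hscale]
      simp only [Fin.cases_succ]
      exact F.mul_mem ht (hvF j)
  have hkF : ∀ x : k, algebraMap k K x ∈ F := by
    intro x
    refine ⟨algebraMap k L x, ?_⟩
    rw [AlgHom.toRingHom_eq_coe, RingHom.coe_coe, IsScalarTower.algebraMap_apply k S L,
      hΨalg]
    exact (aeval v).commutes x
  have haF : ∀ p : MvPolynomial (Fin (n + 1)) k, aeval c p ∈ F := by
    intro p
    induction p using MvPolynomial.induction_on with
    | C x => rw [aeval_C]; exact hkF x
    | add p q hp hq => rw [map_add]; exact F.add_mem hp hq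
    | mul_X p i hp => rw [map_mul, aeval_X]; exact F.mul_mem hp (hcF i)
  have hAF : ∀ a : A, algebraMap A K a ∈ F := by
    intro a
    obtain ⟨p, rfl⟩ := hmksurj a
    rw [← hPhi]
    exact haF p
  have hsurj : Function.Surjective Ψ := by
    intro z
    obtain ⟨x, y, -, rfl⟩ := IsFractionRing.div_surjective (A := A) z
    have hmem : algebraMap A K x / algebraMap A K y ∈ F := F.div_mem (hAF x) (hAF y)
    obtain ⟨w, hw⟩ := hmem
    exact ⟨w, hw⟩
  have hbij : Function.Bijective Ψ := ⟨Ψ.toRingHom.injective, hsurj⟩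
  exact ⟨(AlgEquiv.ofBijective Ψ hbij).symm⟩

end AffineHypersurfaceAux

set_option synthInstance.maxHeartbeats 1000000 in
set_option maxHeartbeats 1000000 in
open AffineHypersurfaceAux in
/-- Affine-chart form of Lemma 2.1: a degree-`d` hypersurface with multiplicity `d-1`
at a rational point is rational.  In the affine chart centered at the point, the
hypersurface is `{g + h = 0}` with `g` homogeneous of degree `d-1` and `h` homogeneous
of degree `d`, and the conclusion is that its function field is purely transcendental
of transcendence degree `n` over `k`. -/
theorem affine_hypersurface_with_multiplicity_rational
    (k : Type*) [Field k] (n d : ℕ) (hn : 1 ≤ n) (hd : 2 ≤ d)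
    (g h : MvPolynomial (Fin (n + 1)) k)
    (hg : g.IsHomogeneous (d - 1)) (hh : h.IsHomogeneous d)
    (hg0 : g ≠ 0) (hh0 : h ≠ 0) (hprime : Prime (g + h)) :
    Nonempty
      (FractionRing (MvPolynomial (Fin (n + 1)) k ⧸ Ideal.span {g + h}) ≃ₐ[k]
        FractionRing (MvPolynomial (Fin n) k)) := by
  haveI hP : (Ideal.span {g + h}).IsPrime :=
    (Ideal.span_singleton_prime hprime.ne_zero).mpr hprime
  exact main_aux n d hd g h hg hh hg0 hh0
    (MvPolynomial (Fin (n + 1)) k ⧸ Ideal.span {g + h})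
    (Ideal.Quotient.mkₐ k (Ideal.span {g + h}))
    (Ideal.Quotient.mkₐ_surjective k _)
    (fun p => by
      rw [Ideal.Quotient.mkₐ_eq_mk, Ideal.Quotient.eq_zero_iff_mem, Ideal.mem_span_singleton])
    (FractionRing (MvPolynomial (Fin (n + 1)) k ⧸ Ideal.span {g + h}))
    (FractionRing (MvPolynomial (Fin n) k))
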